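/- Let P_1,…,P_m (m ≥ 2) be n×n orthogonal projection matrices and let M be the mn×mn block matrix whose i-th diagonal block is I_n − (1/2)P_i, whose (i, i−1) block is (1/2)P_i for i = 2,…,m, whose (1, m) block is (1/2)P_1, and whose remaining blocks are zero (so x(t+1) = M x(t) encodes the cycle updates x_i(t+1) = x_i(t) − (1/2)P_i(x_i(t) − x_{i−1}(t))). If λ is an eigenvalue of M with λ ≠ 1, then |λ| < 1. -/

import Mathlib

open Matrix

/-- The `mn × mn` stacked update matrix of the cycle iteration
`x i (t+1) = x i t − (1/2) P i (x i t − x (i-1) t)` (indices mod `m`): its `i`-th diagonal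
block is `I − (1/2) P i`, its `(i, i-1)` block is `(1/2) P i`, and all other blocks vanish. -/
noncomputable def cycM (m n : ℕ) [NeZero m] (P : Fin m → Matrix (Fin n) (Fin n) ℝ) :
    Matrix (Fin m × Fin n) (Fin m × Fin n) ℝ :=
  Matrix.of fun p q =>
    (if q.1 = p.1 then ((1 : Matrix (Fin n) (Fin n) ℝ) - (1 / 2 : ℝ) • P p.1) p.2 q.2 else 0) +
    (if q.1 = p.1 - 1 then ((1 / 2 : ℝ) • P p.1) p.2 q.2 else 0)


noncomputable def cnorm {n : ℕ} (w : Fin n → ℂ) : ℝ := ‖(WithLp.equiv 2 (Fin n → ℂ)).symm w‖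

lemma cnorm_nonneg {n : ℕ} (w : Fin n → ℂ) : 0 ≤ cnorm w := norm_nonneg _

lemma cnorm_pos {n : ℕ} (w : Fin n → ℂ) (hw : w ≠ 0) : 0 < cnorm w := by
  refine norm_pos_iff.mpr fun h0 => hw ?_
  have := congrArg (WithLp.equiv 2 (Fin n → ℂ)) h0
  simpa using this

lemma cnorm_smul {n : ℕ} (c : ℂ) (w : Fin n → ℂ) : cnorm (c • w) = ‖c‖ * cnorm w := by
  unfold cnorm
  rw [show (WithLp.equiv 2 (Fin n → ℂ)).symm (c • w)
      = c • (WithLp.equiv 2 (Fin n → ℂ)).symm w from rfl, norm_smul]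

lemma proj_lin_norm_le (n : ℕ) (Q : Matrix (Fin n) (Fin n) ℂ) (hH : Qᴴ = Q) (hI : Q * Q = Q)
    (w : EuclideanSpace ℂ (Fin n)) : ‖Matrix.toEuclideanLin Q w‖ ≤ ‖w‖ := by
  set T := Matrix.toEuclideanLin Q with hT
  have hadj : LinearMap.adjoint T = T := by
    rw [hT, ← Matrix.toEuclideanLin_conjTranspose_eq_adjoint, hH]
  have hTT : T (T w) = T w := by
    simp only [hT, Matrix.toEuclideanLin_apply, Equiv.apply_symm_apply, Matrix.mulVec_mulVec, hI]
  have h1 : (inner ℂ (T w) (T w) : ℂ) = inner ℂ w (T w) := by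
    rw [show (inner ℂ (T w) (T w) : ℂ) = inner ℂ ((LinearMap.adjoint T) w) (T w) from by rw [hadj],
      LinearMap.adjoint_inner_left, hTT]
  have h2 : ‖T w‖ ^ 2 ≤ ‖w‖ * ‖T w‖ := by
    calc ‖T w‖ ^ 2 = ‖(inner ℂ (T w) (T w) : ℂ)‖ := by
          rw [inner_self_eq_norm_sq_to_K]; simp [norm_pow]
    _ = ‖(inner ℂ w (T w) : ℂ)‖ := by rw [h1]
    _ ≤ ‖w‖ * ‖T w‖ := norm_inner_le_norm (𝕜 := ℂ) w (T w)
  nlinarith [norm_nonneg (T w), norm_nonneg w]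

lemma cnorm_mulVec_le {n : ℕ} (Q : Matrix (Fin n) (Fin n) ℂ) (hH : Qᴴ = Q) (hI : Q * Q = Q)
    (w : Fin n → ℂ) : cnorm (Q *ᵥ w) ≤ cnorm w := by
  have := proj_lin_norm_le n Q hH hI ((WithLp.equiv 2 (Fin n → ℂ)).symm w)
  exact this

theorem cycM_mulVec (m n : ℕ) [NeZero m] (P : Fin m → Matrix (Fin n) (Fin n) ℝ)
    (v : Fin m × Fin n → ℂ) (i : Fin m) (j : Fin n) :
    ((cycM m n P).map (algebraMap ℝ ℂ) *ᵥ v) (i, j) =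
      ((((1 : Matrix (Fin n) (Fin n) ℂ) - (1/2 : ℂ) • (P i).map (algebraMap ℝ ℂ)) *ᵥ
        fun l => v (i, l)) j) +
      ((((1/2 : ℂ) • (P i).map (algebraMap ℝ ℂ)) *ᵥ fun l => v (i - 1, l)) j) := by
  simp only [mulVec, dotProduct, Fintype.sum_prod_type, cycM, Matrix.map_apply, Matrix.of_apply,
    map_add, apply_ite (algebraMap ℝ ℂ), map_zero, add_mul, ite_mul, zero_mul,
    Finset.sum_add_distrib]
  congr 1
  · rw [Finset.sum_eq_single i (fun b _ hb => by simp [hb]) (by simp)]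
    refine Finset.sum_congr rfl fun l _ => ?_
    simp only [if_pos rfl, Matrix.sub_apply, Matrix.smul_apply, Matrix.one_apply,
      Matrix.map_apply, smul_eq_mul]
    split_ifs <;> push_cast <;> ring
  · rw [Finset.sum_eq_single (i - 1) (fun b _ hb => by simp [hb]) (by simp)]
    refine Finset.sum_congr rfl fun l _ => ?_
    simp only [if_pos rfl, Matrix.smul_apply, Matrix.map_apply, smul_eq_mul]
    push_cast; ring

/-- If `P 0, …, P (m-1)` are orthogonal projections (symmetric idempotents) and
`λ ≠ 1` is a (complex) eigenvalue of the cycle update matrix `M`, then `|λ| < 1`. -/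
theorem stmt_16 (m n : ℕ) [NeZero m] (hm : 2 ≤ m)
    (P : Fin m → Matrix (Fin n) (Fin n) ℝ)
    (hsymm : ∀ i, (P i).IsSymm) (hidem : ∀ i, P i * P i = P i)
    (lam : ℂ)
    (hev : Module.End.HasEigenvalue
      (Matrix.mulVecLin ((cycM m n P).map (algebraMap ℝ ℂ))) lam)
    (hne : lam ≠ 1) :
    ‖lam‖ < 1 := by
  obtain ⟨v, hv⟩ := hev.exists_hasEigenvector
  have hveq : (cycM m n P).map (algebraMap ℝ ℂ) *ᵥ v = lam • v := by
    have := hv.apply_eq_smul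
    simpa [Matrix.mulVecLin_apply] using this
  set Q : Fin m → Matrix (Fin n) (Fin n) ℂ := fun i => (P i).map (algebraMap ℝ ℂ) with hQdef
  set x : Fin m → Fin n → ℂ := fun i l => v (i, l) with hxdef
  have hQH : ∀ i, (Q i)ᴴ = Q i := by
    intro i
    ext k l
    have hs : P i l k = P i k l := by
      conv_lhs => rw [← (hsymm i)]
      rfl
    simp [hQdef, Matrix.conjTranspose_apply, Matrix.map_apply, hs, Complex.conj_ofReal]
  have hQ2 : ∀ i, Q i * Q i = Q i := by
    intro i
    rw [hQdef]
    rw [← Matrix.map_mul, hidem i]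
  -- the block eigen-equations
  have blk : ∀ i, lam • x i = x i - (1/2 : ℂ) • (Q i *ᵥ x i) + (1/2 : ℂ) • (Q i *ᵥ x (i-1)) := by
    intro i
    funext j
    have h := congrFun hveq (i, j)
    rw [cycM_mulVec] at h
    rw [sub_mulVec, one_mulVec, smul_mulVec, smul_mulVec] at h
    simpa [hxdef, hQdef] using h.symm
  -- the eigenvector components lie in the range of the projections
  have hfix : ∀ i, Q i *ᵥ x i = x i := by
    intro i
    have h2 : (lam - 1) • x i = (1/2 : ℂ) • (Q i *ᵥ x (i-1)) - (1/2 : ℂ) • (Q i *ᵥ x i) := by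
      rw [sub_smul, one_smul, blk i]; abel
    have h3 : Q i *ᵥ ((lam - 1) • x i) = (lam - 1) • x i := by
      rw [h2, Matrix.mulVec_sub, mulVec_smul, mulVec_smul, Matrix.mulVec_mulVec,
        Matrix.mulVec_mulVec, hQ2 i, ← h2]
    rw [mulVec_smul] at h3
    exact smul_right_injective (Fin n → ℂ) (sub_ne_zero.mpr hne) h3
  have hkey : ∀ i, Q i *ᵥ x (i - 1) = (2 * lam - 1) • x i := by
    intro i
    have h2 : (lam - 1) • x i = (1/2 : ℂ) • (Q i *ᵥ x (i-1)) - (1/2 : ℂ) • x i := by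
      rw [sub_smul, one_smul, blk i, hfix i]; abel
    have h3 := congrArg (fun w => (2:ℂ) • w) h2
    simp only [smul_sub, smul_smul] at h3
    norm_num at h3
    have h4 : (2*lam - 1) • x i = (2*(lam-1)) • x i + x i := by
      rw [show (2*lam-1 : ℂ) = 2*(lam-1)+1 by ring, add_smul, one_smul]
    rw [h4, h3]
    abel
  -- norm inequality around the cycle
  have hle : ∀ i : Fin m, ‖2*lam - 1‖ * cnorm (x i) ≤ cnorm (x (i-1)) := by
    intro i
    calc ‖2*lam - 1‖ * cnorm (x i) = cnorm ((2*lam-1) • x i) := (cnorm_smul _ _).symm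
    _ = cnorm (Q i *ᵥ x (i-1)) := by rw [hkey i]
    _ ≤ cnorm (x (i-1)) := cnorm_mulVec_le (Q i) (hQH i) (hQ2 i) _
  have hsum : ‖2*lam - 1‖ * (∑ i, cnorm (x i)) ≤ ∑ i, cnorm (x i) := by
    calc ‖2*lam - 1‖ * (∑ i, cnorm (x i)) = ∑ i, ‖2*lam - 1‖ * cnorm (x i) := Finset.mul_sum _ _ _
    _ ≤ ∑ i, cnorm (x (i-1)) := Finset.sum_le_sum fun i _ => hle i
    _ = ∑ i, cnorm (x i) := Fintype.sum_equiv (Equiv.subRight 1) _ _ fun i => rfl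
  have hS : 0 < ∑ i, cnorm (x i) := by
    obtain ⟨p, hp⟩ := Function.ne_iff.mp hv.2
    refine Finset.sum_pos' (fun i _ => cnorm_nonneg _) ⟨p.1, Finset.mem_univ _, ?_⟩
    refine cnorm_pos _ fun h0 => hp ?_
    have := congrFun h0 p.2
    simpa [hxdef] using this
  have hc : ‖2*lam - 1‖ ≤ 1 := by
    by_contra hgt
    push_neg at hgt
    nlinarith
  -- conclude
  by_contra hout
  push_neg at hout
  have habs : Complex.normSq (2*lam - 1) ≤ 1 := by
    have := Complex.sq_norm (2*lam - 1)
    have h1 : ‖2*lam-1‖ ≤ 1 := hc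
    nlinarith [norm_nonneg (2*lam-1)]
  have habs2 : 1 ≤ Complex.normSq lam := by
    have := Complex.sq_norm lam
    have h1 : (1:ℝ) ≤ ‖lam‖ := hout
    nlinarith
  rw [Complex.normSq_apply] at habs2
  have hre : (2*lam - 1).re = 2*lam.re - 1 := by simp
  have him : (2*lam - 1).im = 2*lam.im := by simp
  rw [Complex.normSq_apply, hre, him] at habs
  have hre1 : lam.re = 1 := by nlinarith
  have him0 : lam.im = 0 := by nlinarith
  exact hne (Complex.ext hre1 him0)
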